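/- If Z is a real-valued random variable whose distribution is symmetric (Z has the same law as −Z) and E[e^{Z − Z²/2}] exists, then E[exp(Z − Z²/2)] ≤ 1. -/

import Mathlib

open MeasureTheory Filter
open scoped ENNReal

/-- If `Z` is a real random variable with symmetric law (`Z` and `-Z` have the same
distribution) and `exp(Z - Z²/2)` is integrable, then `E[exp(Z - Z²/2)] ≤ 1`. -/
theorem symmetric_exp_expectation_le_one {Ω : Type*} {m0 : MeasurableSpace Ω}
    (μ : Measure Ω) [IsProbabilityMeasure μ] (Z : Ω → ℝ) (hZ : Measurable Z)
    (hsym : Measure.map Z μ = Measure.map (fun ω => -Z ω) μ)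
    (hint : Integrable (fun ω => Real.exp (Z ω - (Z ω) ^ 2 / 2)) μ) :
    ∫ ω, Real.exp (Z ω - (Z ω) ^ 2 / 2) ∂μ ≤ 1 := by
  set f : ℝ → ℝ := fun z => Real.exp (z - z ^ 2 / 2) with hf
  have hfm : Measurable f := by fun_prop
  have hmap : ∫ ω, f (Z ω) ∂μ = ∫ ω, f (-Z ω) ∂μ := by
    rw [← integral_map hZ.aemeasurable hfm.aestronglyMeasurable, hsym,
      integral_map (φ := fun ω => -Z ω) (hZ.neg).aemeasurable hfm.aestronglyMeasurable]
  have hint' : Integrable (fun ω => f (-Z ω)) μ := by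
    have : Integrable f (Measure.map (fun ω => -Z ω) μ) := by
      rw [← hsym]
      exact (integrable_map_measure hfm.aestronglyMeasurable hZ.aemeasurable).2 hint
    exact (integrable_map_measure hfm.aestronglyMeasurable (hZ.neg).aemeasurable).1 this
  have key : ∫ ω, f (Z ω) ∂μ = ∫ ω, (f (Z ω) + f (-Z ω)) / 2 ∂μ := by
    rw [integral_div, integral_add hint hint', ← hmap]
    ring
  rw [key]
  have hb : ∀ ω, (f (Z ω) + f (-Z ω)) / 2 ≤ 1 := by
    intro ω
    have h1 : f (Z ω) + f (-Z ω) = 2 * Real.exp (-(Z ω ^ 2) / 2) * Real.cosh (Z ω) := by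
      have e1 : Real.exp (Z ω - Z ω ^ 2 / 2)
          = Real.exp (-(Z ω ^ 2) / 2) * Real.exp (Z ω) := by
        rw [← Real.exp_add]; ring_nf
      have e2 : Real.exp (-Z ω - Z ω ^ 2 / 2)
          = Real.exp (-(Z ω ^ 2) / 2) * Real.exp (-Z ω) := by
        rw [← Real.exp_add]; ring_nf
      rw [Real.cosh_eq]
      simp only [hf, neg_sq]
      rw [e1, e2]; ring
    have h2 : Real.cosh (Z ω) ≤ Real.exp (Z ω ^ 2 / 2) := Real.cosh_le_exp_half_sq _
    have h3 : (0:ℝ) < Real.exp (-(Z ω ^ 2) / 2) := Real.exp_pos _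
    calc (f (Z ω) + f (-Z ω)) / 2 = Real.exp (-(Z ω ^ 2) / 2) * Real.cosh (Z ω) := by
          rw [h1]; ring
      _ ≤ Real.exp (-(Z ω ^ 2) / 2) * Real.exp (Z ω ^ 2 / 2) :=
          mul_le_mul_of_nonneg_left h2 h3.le
      _ = 1 := by rw [← Real.exp_add]; ring_nf; exact Real.exp_zero
  calc ∫ ω, (f (Z ω) + f (-Z ω)) / 2 ∂μ ≤ ∫ _, (1:ℝ) ∂μ :=
        integral_mono ((hint.add hint').div_const 2) (integrable_const 1) hb
    _ = 1 := by simp
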